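/- For every integer n ≥ 7, P_n / 16^n < ( (n−2)(n+1) / ((n−1)n) )^(n(n−1)/2) · ( (n−2)/(n−1) )^n. -/

import Mathlib

theorem key_clf (t : ℕ) (ht : 2 ≤ t) :
    ((t:ℝ)-1)^t * ((t:ℝ)+1)^(t+1) ≤ (t:ℝ)^(2*t+1) := by
  set x := (t:ℝ) with hx
  have hx2 : (2:ℝ) ≤ x := by rw [hx]; exact_mod_cast ht
  have h1 : (0:ℝ) < x - 1 := by linarith
  have h2 : (0:ℝ) < x^2 - 1 := by nlinarith
  have hb := one_add_mul_le_pow (by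
    have h3 : (0:ℝ) < 1/(x^2-1) := by positivity
    linarith : (-2:ℝ) ≤ 1/(x^2-1)) (t+1)
  have hL : x/(x-1) ≤ (1 + 1/(x^2-1))^(t+1) := by
    have hc : ((t+1:ℕ):ℝ) = x + 1 := by push_cast [hx]; ring
    have he : x/(x-1) = 1 + ((t+1:ℕ):ℝ) * (1/(x^2-1)) := by
      rw [hc]; field_simp; ring
    linarith [hb, he.ge, he.le]
  rw [show (1:ℝ) + 1/(x^2-1) = x^2/(x^2-1) by field_simp; ring, div_pow,
    div_le_div_iff₀ h1 (by positivity)] at hL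
  have e1 : (x^2-1)^(t+1) = (x-1)^(t+1)*(x+1)^(t+1) := by
    rw [← mul_pow]; congr 1; ring
  rw [e1] at hL
  have hpos : (0:ℝ) < x*(x-1) := by nlinarith
  have hfin : ((x-1)^t * (x+1)^(t+1)) * (x*(x-1)) ≤ x^(2*t+1) * (x*(x-1)) := by
    calc ((x-1)^t * (x+1)^(t+1)) * (x*(x-1))
        = x * ((x-1)^(t+1) * (x+1)^(t+1)) := by ring
      _ ≤ (x^2)^(t+1) * (x-1) := hL
      _ = x^(2*t+1) * (x*(x-1)) := by rw [← pow_mul]; ring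
  exact le_of_mul_le_mul_right hfin hpos

theorem fA_clf (t : ℕ) (ht : 21 ≤ t) : ((20:ℝ)/21)^21 ≤ (((t:ℝ)-1)/(t:ℝ))^t := by
  induction t, ht using Nat.le_induction with
  | base => norm_num
  | succ t ht ih =>
    refine ih.trans ?_
    have hx : (2:ℝ) ≤ (t:ℝ) := by exact_mod_cast (by omega : (2:ℕ) ≤ t)
    push_cast
    rw [show ((t:ℝ)+1-1) = (t:ℝ) by ring, div_pow, div_pow,
      div_le_div_iff₀ (by positivity) (by positivity)]
    calc ((t:ℝ)-1)^t * ((t:ℝ)+1)^(t+1) ≤ (t:ℝ)^(2*t+1) := key_clf t (by omega)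
      _ = (t:ℝ)^(t+1) * (t:ℝ)^t := by rw [← pow_add]; congr 1; omega

theorem fB_clf (s : ℕ) (hs : 6 ≤ s) : ((5:ℝ)/6)^7 ≤ (((s:ℝ)-1)/(s:ℝ))^(s+1) := by
  induction s, hs using Nat.le_induction with
  | base => norm_num
  | succ s hs ih =>
    refine ih.trans ?_
    have hx : (2:ℝ) ≤ (s:ℝ) := by exact_mod_cast (by omega : (2:ℕ) ≤ s)
    push_cast
    rw [show ((s:ℝ)+1-1) = (s:ℝ) by ring, div_pow, div_pow,
      div_le_div_iff₀ (by positivity) (by positivity)]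
    calc ((s:ℝ)-1)^(s+1) * ((s:ℝ)+1)^(s+1+1)
        = (((s:ℝ)-1)^s * ((s:ℝ)+1)^(s+1)) * (((s:ℝ)-1)*((s:ℝ)+1)) := by ring
      _ ≤ (s:ℝ)^(2*s+1) * (((s:ℝ)-1)*((s:ℝ)+1)) := by
          apply mul_le_mul_of_nonneg_right (key_clf s (by omega))
          nlinarith
      _ ≤ (s:ℝ)^(2*s+1) * ((s:ℝ)^2) := by
          apply mul_le_mul_of_nonneg_left (by nlinarith) (by positivity)
      _ = (s:ℝ)^(s+1+1) * (s:ℝ)^(s+1) := by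
          rw [← pow_add, ← pow_add]; congr 1; omega

theorem Pn_over_16n_upper_bound (P : ℕ → ℝ)
    (hP0 : P 0 = 1) (hP1 : P 1 = 8)
    (hPrec : ∀ n : ℕ, 1 ≤ n →
      ((n : ℝ) + 1) ^ 2 * P (n + 1)
        = 8 * (3 * (n : ℝ) ^ 2 + 3 * (n : ℝ) + 1) * P n - 128 * (n : ℝ) ^ 2 * P (n - 1))
    (hPpos : ∀ n : ℕ, 0 < P n) :
    ∀ n : ℕ, 7 ≤ n →
      P n / 16 ^ n
        < (((n : ℝ) - 2) * ((n : ℝ) + 1) / (((n : ℝ) - 1) * (n : ℝ))) ^ (n * (n - 1) / 2)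
            * (((n : ℝ) - 2) / ((n : ℝ) - 1)) ^ n := by
  -- exact small values
  have h1 := hPrec 1 (by norm_num)
  norm_num [hP0, hP1] at h1
  have hv2 : P 2 = 80 := by linarith
  have h2 := hPrec 2 (by norm_num)
  norm_num [hP1, hv2] at h2
  have hv3 : P 3 = 896 := by linarith
  have h3 := hPrec 3 (by norm_num)
  norm_num [hv2, hv3] at h3
  have hv4 : P 4 = 10816 := by linarith
  have h4 := hPrec 4 (by norm_num)
  norm_num [hv3, hv4] at h4
  have hv5 : P 5 = 137728 := by linarith
  have h5 := hPrec 5 (by norm_num)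
  norm_num [hv4, hv5] at h5
  have hv6 : P 6 = 1823744 := by linarith
  have h6 := hPrec 6 (by norm_num)
  norm_num [hv5, hv6] at h6
  have hv7 : P 7 = 24862720 := by linarith
  -- decreasing ratio: P (n+1) ≤ 16 * P n
  have hdec : ∀ n : ℕ, P (n+1) ≤ 16 * P n := by
    intro n
    induction n with
    | zero => rw [hP1, hP0]; norm_num
    | succ n ih =>
      have hr := hPrec (n+1) (by omega)
      simp only [Nat.add_sub_cancel] at hr
      push_cast at hr
      have haux : 8*((n:ℝ)+1)^2 * P (n+1) ≤ 128*((n:ℝ)+1)^2 * P n := by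
        nlinarith [mul_le_mul_of_nonneg_left ih (show (0:ℝ) ≤ 8*((n:ℝ)+1)^2 by positivity)]
      have hc : (0:ℝ) < ((n:ℝ)+2)^2 := by positivity
      have h2 : ((n:ℝ)+2)^2 * P (n+2) ≤ ((n:ℝ)+2)^2 * (16 * P (n+1)) := by
        nlinarith [hPpos (n+1), mul_nonneg (show (0:ℝ) ≤ 8*(n:ℝ)+16 by positivity)
          (le_of_lt (hPpos (n+1)))]
      have := (mul_le_mul_iff_right₀ hc).mp h2
      exact this
  -- telescoping
  have htel : ∀ k : ℕ, P (7+k) ≤ 16^k * P 7 := by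
    intro k
    induction k with
    | zero => simp
    | succ k ih =>
      calc P (7+(k+1)) = P ((7+k)+1) := by ring_nf
        _ ≤ 16 * P (7+k) := hdec (7+k)
        _ ≤ 16 * (16^k * P 7) := by linarith
        _ = 16^(k+1) * P 7 := by ring
  intro n hn
  have h1n : (1:ℕ) ≤ n := by omega
  have hnR : (7:ℝ) ≤ (n:ℝ) := by exact_mod_cast hn
  -- Q_n ≤ Q_7
  have hq : P n ≤ 16^(n-7) * P 7 := by
    have := htel (n-7)
    rwa [show 7+(n-7) = n by omega] at this
  have h16n : (16:ℝ)^n = 16^7 * 16^(n-7) := by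
    rw [← pow_add]; congr 1; omega
  have hQ : P n / 16^n ≤ P 7 / 16^7 := by
    rw [h16n, div_le_div_iff₀ (by positivity) (by positivity)]
    calc P n * 16^7 ≤ (16^(n-7) * P 7) * 16^7 :=
          mul_le_mul_of_nonneg_right hq (by positivity)
      _ = P 7 * (16^7 * 16^(n-7)) := by ring
  -- the factor A
  set t := n * (n-1) / 2 with htdef
  have hev : 2 ∣ n * (n-1) := by
    rcases Nat.even_or_odd n with h | h
    · exact Dvd.dvd.mul_right h.two_dvd _
    · have : Even (n-1) := by rcases h with ⟨k, hk⟩; exact ⟨k, by omega⟩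
      exact Dvd.dvd.mul_left this.two_dvd _
  have ht2 : t * 2 = n * (n-1) := Nat.div_mul_cancel hev
  have h42 : 42 ≤ n * (n-1) := by
    calc 42 = 7 * 6 := by norm_num
      _ ≤ n * (n-1) := Nat.mul_le_mul (by omega) (by omega)
  have ht21 : 21 ≤ t := by omega
  have htR : (t:ℝ) * 2 = (n:ℝ) * ((n:ℝ)-1) := by
    have hc := congrArg (Nat.cast : ℕ → ℝ) ht2
    push_cast [h1n] at hc
    linarith [hc]
  have ht0 : (0:ℝ) < (t:ℝ) := by exact_mod_cast (by omega : 0 < t)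
  have hbase : ((n:ℝ)-2)*((n:ℝ)+1)/(((n:ℝ)-1)*(n:ℝ)) = ((t:ℝ)-1)/(t:ℝ) := by
    have hd1 : ((n:ℝ)-1)*(n:ℝ) ≠ 0 := by nlinarith
    have hd2 : (t:ℝ) ≠ 0 := ne_of_gt ht0
    rw [div_eq_div_iff hd1 hd2]
    linear_combination (-1 : ℝ) * htR
  have hA : ((20:ℝ)/21)^21 ≤ (((n:ℝ)-2)*((n:ℝ)+1)/(((n:ℝ)-1)*(n:ℝ)))^(n*(n-1)/2) := by
    rw [hbase]
    exact fA_clf t ht21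
  -- the factor B
  have hB : ((5:ℝ)/6)^7 ≤ (((n:ℝ)-2)/((n:ℝ)-1))^n := by
    have hfb := fB_clf (n-1) (by omega)
    have e : ((n-1:ℕ):ℝ) = (n:ℝ)-1 := by
      rw [Nat.cast_sub h1n, Nat.cast_one]
    rw [e, Nat.sub_add_cancel h1n, show (n:ℝ)-1-1 = (n:ℝ)-2 by ring] at hfb
    exact hfb
  have hAnn : (0:ℝ) ≤ (((n:ℝ)-2)*((n:ℝ)+1)/(((n:ℝ)-1)*(n:ℝ)))^(n*(n-1)/2) := by
    apply pow_nonneg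
    apply div_nonneg <;> nlinarith
  have hprod : ((20:ℝ)/21)^21 * ((5:ℝ)/6)^7
      ≤ (((n:ℝ)-2)*((n:ℝ)+1)/(((n:ℝ)-1)*(n:ℝ)))^(n*(n-1)/2)
        * (((n:ℝ)-2)/((n:ℝ)-1))^n :=
    mul_le_mul hA hB (by positivity) hAnn
  have hnum : P 7 / 16^7 < ((20:ℝ)/21)^21 * ((5:ℝ)/6)^7 := by
    rw [hv7]; norm_num
  calc P n / 16^n ≤ P 7 / 16^7 := hQ
    _ < ((20:ℝ)/21)^21 * ((5:ℝ)/6)^7 := hnum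
    _ ≤ _ := hprod
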